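/- Let n ≥ 1 and let D, D₀ be self-adjoint n×n complex matrices with D - D₀ =: V. Set f(t) = t(1+t²)^{-1/2}. Then ‖f(D) - f(D₀)‖ ≤ C‖V‖ for an absolute constant C independent of n, D, D₀, where ‖·‖ is the operator norm and f(D) is defined by the spectral theorem. -/

import Mathlib

set_option maxHeartbeats 1000000
set_option synthInstance.maxHeartbeats 400000

open MeasureTheory Real
open scoped InnerProductSpace

noncomputable section
variable {n : ℕ}
local notation "H" => EuclideanSpace ℂ (Fin n)

lemma mem_spectrum_of_eigen {T : H →L[ℂ] H} {μ : ℝ} {v : H} (hv0 : v ≠ 0) (hv : T v = μ • v) :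
    μ ∈ spectrum ℝ T := by
  rw [spectrum.mem_iff]
  intro h
  apply hv0
  have h2 : (algebraMap ℝ (H →L[ℂ] H) μ - T) v = 0 := by
    simp [Algebra.algebraMap_eq_smul_one, ContinuousLinearMap.sub_apply,
      ContinuousLinearMap.smul_apply, hv, ContinuousLinearMap.one_apply]
  calc v = ((↑h.unit⁻¹ * ↑h.unit : H →L[ℂ] H)) v := by
        rw [Units.inv_mul]; simp
    _ = (↑h.unit⁻¹ : H →L[ℂ] H) ((algebraMap ℝ (H →L[ℂ] H) μ - T) v) := by
        rw [ContinuousLinearMap.mul_apply, h.unit_spec]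
    _ = 0 := by rw [h2, map_zero]

lemma cfc_eigen {T : H →L[ℂ] H} (hT : IsSelfAdjoint T) {f : ℝ → ℝ} (hf : Continuous f)
    {μ : ℝ} {v : H} (hv0 : v ≠ 0) (hv : T v = μ • v) :
    cfc f T v = f μ • v := by
  have hμ : μ ∈ spectrum ℝ T := mem_spectrum_of_eigen hv0 hv
  have key : ∀ g : C(spectrum ℝ T, ℝ), cfcHom hT (R := ℝ) g v = g ⟨μ, hμ⟩ • v := by
    intro g
    induction g using ContinuousMap.induction_on_of_compact with
    | const r =>
      have : (ContinuousMap.const (spectrum ℝ T) r) = algebraMap ℝ C(spectrum ℝ T, ℝ) r := rfl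
      rw [this, AlgHomClass.commutes]
      simp [Algebra.algebraMap_eq_smul_one, ContinuousLinearMap.smul_apply,
        ContinuousLinearMap.one_apply]
    | id =>
      rw [cfcHom_id hT]
      simpa using hv
    | star_id =>
      rw [star_trivial, cfcHom_id hT]
      simpa using hv
    | add f g hfg hg =>
      rw [map_add (cfcHom hT (R := ℝ)) f g, ContinuousLinearMap.add_apply, hfg, hg]
      simp [add_smul]
    | mul f g hfg hg =>
      rw [map_mul (cfcHom hT (R := ℝ)) f g, ContinuousLinearMap.mul_apply, hg,
        ContinuousLinearMap.map_smul_of_tower, hfg]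
      simp [smul_smul, mul_comm]
    | frequently g hg =>
      have hclosed : IsClosed {g : C(spectrum ℝ T, ℝ) | cfcHom hT (R := ℝ) g v = g ⟨μ, hμ⟩ • v} := by
        apply isClosed_eq
        · exact (ContinuousLinearMap.apply ℂ H v).continuous.comp
            (cfcHom_isClosedEmbedding (R := ℝ) hT).continuous
        · exact (continuous_eval_const (F := C(spectrum ℝ T, ℝ)) (⟨μ, hμ⟩ : spectrum ℝ T)).smul continuous_const
      exact hclosed.closure_subset (mem_closure_iff_frequently.mpr hg)
  rw [cfc_apply f T hT hf.continuousOn]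
  exact key _

def Uop (T : H →L[ℂ] H) (s : ℝ) : H →L[ℂ] H := (1 + s^2 : ℝ) • 1 + T * T

lemma Uop_apply (T : H →L[ℂ] H) (s : ℝ) (x : H) :
    Uop T s x = (1 + s^2 : ℝ) • x + T (T x) := by
  simp [Uop, ContinuousLinearMap.add_apply, ContinuousLinearMap.smul_apply,
    ContinuousLinearMap.one_apply, ContinuousLinearMap.mul_apply]

lemma coerc {T : H →L[ℂ] H} (hT : IsSelfAdjoint T) (s : ℝ) (x : H) :
    (1 + s^2) * ‖x‖^2 + ‖T x‖^2 ≤ ‖x‖ * ‖Uop T s x‖ := by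
  have hadj : ContinuousLinearMap.adjoint T = T := ContinuousLinearMap.isSelfAdjoint_iff'.mp hT
  have h2 : ⟪x, T (T x)⟫_ℂ = ⟪T x, T x⟫_ℂ := by
    calc ⟪x, T (T x)⟫_ℂ = ⟪x, ContinuousLinearMap.adjoint T (T x)⟫_ℂ := by rw [hadj]
      _ = ⟪T x, T x⟫_ℂ := ContinuousLinearMap.adjoint_inner_right T x (T x)
  have h1 : RCLike.re ⟪x, Uop T s x⟫_ℂ = (1+s^2) * ‖x‖^2 + ‖T x‖^2 := by
    rw [Uop_apply, inner_add_right]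
    have hsm : ((1 + s^2 : ℝ) • x : H) = ((1 + s^2 : ℝ) : ℂ) • x := (algebraMap_smul ℂ _ x).symm
    have hre : RCLike.re ((((1 + s^2 : ℝ)) : ℂ) * ⟪x, x⟫_ℂ) = (1 + s^2) * RCLike.re ⟪x, x⟫_ℂ := by
      simp [RCLike.re_to_complex, Complex.re_ofReal_mul, ← Complex.ofReal_pow]
    rw [hsm, inner_smul_right, h2, map_add, hre,
      inner_self_eq_norm_sq (𝕜 := ℂ) x, inner_self_eq_norm_sq (𝕜 := ℂ) (T x)]
  calc (1 + s^2) * ‖x‖^2 + ‖T x‖^2 = RCLike.re ⟪x, Uop T s x⟫_ℂ := h1.symm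
    _ ≤ ‖x‖ * ‖Uop T s x‖ := re_inner_le_norm (𝕜 := ℂ) x _

lemma isUnit_Uop {T : H →L[ℂ] H} (hT : IsSelfAdjoint T) (s : ℝ) : IsUnit (Uop T s) := by
  have hinj : Function.Injective (Uop T s) := by
    intro a b hab
    rw [← sub_eq_zero]
    by_contra hne
    have h0 : Uop T s (a - b) = 0 := by rw [map_sub, hab, sub_self]
    have hc := coerc hT s (a - b)
    rw [h0] at hc
    have hpos : 0 < ‖a - b‖ := norm_pos_iff.mpr hne
    simp only [norm_zero, mul_zero] at hc
    nlinarith [norm_nonneg (T (a - b)), sq_nonneg s]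
  have hinj' : Function.Injective ((Uop T s) : H →ₗ[ℂ] H) := hinj
  let e : H ≃L[ℂ] H :=
    (LinearEquiv.ofBijective ((Uop T s) : H →ₗ[ℂ] H)
      ⟨hinj', LinearMap.injective_iff_surjective.mp hinj'⟩).toContinuousLinearEquiv
  have he : ∀ x, e x = Uop T s x := fun _ => rfl
  refine ⟨⟨Uop T s, (e.symm : H →L[ℂ] H), ?_, ?_⟩, rfl⟩
  · refine ContinuousLinearMap.ext fun x => ?_
    simp only [ContinuousLinearMap.mul_apply, ContinuousLinearMap.one_apply,
      ContinuousLinearMap.coe_coe]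
    rw [← he]
    exact e.apply_symm_apply x
  · refine ContinuousLinearMap.ext fun x => ?_
    simp only [ContinuousLinearMap.mul_apply, ContinuousLinearMap.one_apply,
      ContinuousLinearMap.coe_coe]
    rw [← he]
    exact e.symm_apply_apply x

def Rres (T : H →L[ℂ] H) (s : ℝ) : H →L[ℂ] H := Ring.inverse (Uop T s)

lemma UR {T : H →L[ℂ] H} (hT : IsSelfAdjoint T) (s : ℝ) : Uop T s * Rres T s = 1 :=
  Ring.mul_inverse_cancel _ (isUnit_Uop hT s)

lemma RU {T : H →L[ℂ] H} (hT : IsSelfAdjoint T) (s : ℝ) : Rres T s * Uop T s = 1 :=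
  Ring.inverse_mul_cancel _ (isUnit_Uop hT s)

lemma norm_Rres_le {T : H →L[ℂ] H} (hT : IsSelfAdjoint T) (s : ℝ) :
    ‖Rres T s‖ ≤ (1 + s^2)⁻¹ := by
  have hl : (0:ℝ) < 1 + s^2 := by positivity
  refine ContinuousLinearMap.opNorm_le_bound _ (by positivity) fun y => ?_
  set x := Rres T s y with hx
  have hUx : Uop T s x = y := by
    have := congrArg (fun A : H →L[ℂ] H => A y) (UR hT s)
    simpa [ContinuousLinearMap.mul_apply] using this
  have hc := coerc hT s x
  rw [hUx] at hc
  rcases eq_or_lt_of_le (norm_nonneg x) with h0 | h0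
  · rw [← h0]; positivity
  · have h2 : ((1 + s^2) * ‖x‖) * ‖x‖ ≤ ‖y‖ * ‖x‖ := by nlinarith [norm_nonneg (T x)]
    have h3 : (1 + s^2) * ‖x‖ ≤ ‖y‖ := le_of_mul_le_mul_right h2 h0
    rw [inv_mul_eq_div, le_div_iff₀ hl]
    linarith

lemma norm_TRres_le {T : H →L[ℂ] H} (hT : IsSelfAdjoint T) (s : ℝ) :
    ‖T * Rres T s‖ ≤ (2 * Real.sqrt (1 + s^2))⁻¹ := by
  have hl : (0:ℝ) < 1 + s^2 := by positivity
  have hsq : Real.sqrt (1 + s^2) ^ 2 = 1 + s^2 := Real.sq_sqrt hl.le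
  have hs0 : 0 < Real.sqrt (1 + s^2) := Real.sqrt_pos.mpr hl
  refine ContinuousLinearMap.opNorm_le_bound _ (by positivity) fun y => ?_
  set x := Rres T s y with hx
  have hUx : Uop T s x = y := by
    have := congrArg (fun A : H →L[ℂ] H => A y) (UR hT s)
    simpa [ContinuousLinearMap.mul_apply] using this
  have hc := coerc hT s x
  rw [hUx] at hc
  have hTx : (T * Rres T s) y = T x := rfl
  rw [hTx]
  rcases eq_or_lt_of_le (norm_nonneg x) with h0 | h0
  · have hx0 : x = 0 := by rw [← norm_eq_zero]; exact h0.symm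
    rw [hx0, map_zero, norm_zero]; positivity
  · have h2 : (2 * Real.sqrt (1 + s^2) * ‖T x‖) * ‖x‖ ≤ ‖y‖ * ‖x‖ := by
      nlinarith [sq_nonneg (Real.sqrt (1 + s^2) * ‖x‖ - ‖T x‖)]
    have h3 : 2 * Real.sqrt (1 + s^2) * ‖T x‖ ≤ ‖y‖ := le_of_mul_le_mul_right h2 h0
    rw [inv_mul_eq_div, le_div_iff₀ (by positivity)]
    linarith

lemma Uop_comm (T : H →L[ℂ] H) (s : ℝ) : Uop T s * T = T * Uop T s := by
  simp only [Uop, add_mul, mul_add, mul_assoc]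
  congr 1
  rw [← Algebra.algebraMap_eq_smul_one]
  exact Algebra.commutes _ _

lemma Rres_comm {T : H →L[ℂ] H} (hT : IsSelfAdjoint T) (s : ℝ) :
    T * Rres T s = Rres T s * T := by
  calc T * Rres T s = (Rres T s * Uop T s) * (T * Rres T s) := by rw [RU hT s, one_mul]
    _ = Rres T s * ((Uop T s * T) * Rres T s) := by simp only [mul_assoc]
    _ = Rres T s * ((T * Uop T s) * Rres T s) := by rw [Uop_comm]
    _ = Rres T s * (T * (Uop T s * Rres T s)) := by simp only [mul_assoc]
    _ = Rres T s * T := by rw [UR hT s, mul_one]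

lemma Rres_eigen {T : H →L[ℂ] H} (hT : IsSelfAdjoint T) (s : ℝ) {μ : ℝ} {v : H}
    (hv : T v = μ • v) : Rres T s v = ((1 + s^2 + μ^2)⁻¹ : ℝ) • v := by
  have hl : (0:ℝ) < 1 + s^2 + μ^2 := by positivity
  have hUv2 : Uop T s v = ((1 + s^2 + μ^2 : ℝ)) • v := by
    rw [Uop_apply, hv, ContinuousLinearMap.map_smul_of_tower, hv, smul_smul, ← add_smul]
    congr 1; ring
  have hUv : Uop T s (((1 + s^2 + μ^2)⁻¹ : ℝ) • v) = v := by
    rw [ContinuousLinearMap.map_smul_of_tower, hUv2, smul_smul, inv_mul_cancel₀ hl.ne', one_smul]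
  calc Rres T s v = Rres T s (Uop T s (((1 + s^2 + μ^2)⁻¹ : ℝ) • v)) := by rw [hUv]
    _ = ((Rres T s * Uop T s)) (((1 + s^2 + μ^2)⁻¹ : ℝ) • v) := rfl
    _ = ((1 + s^2 + μ^2)⁻¹ : ℝ) • v := by rw [RU hT s, ContinuousLinearMap.one_apply]

lemma cont_Rres {T : H →L[ℂ] H} (hT : IsSelfAdjoint T) : Continuous fun s => Rres T s := by
  have hU : Continuous fun s : ℝ => Uop T s := by
    apply Continuous.add
    · exact (continuous_const.add (continuous_pow 2)).smul continuous_const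
    · exact continuous_const
  rw [continuous_iff_continuousAt]
  intro s
  have h1 := NormedRing.inverse_continuousAt (isUnit_Uop hT s).unit
  rw [IsUnit.unit_spec] at h1
  exact ContinuousAt.comp h1 hU.continuousAt

lemma integrable_Gop {T : H →L[ℂ] H} (hT : IsSelfAdjoint T) :
    IntegrableOn (fun s => T * Rres T s) (Set.Ioi (0:ℝ)) := by
  apply Integrable.mono' (integrable_inv_one_add_sq.restrict.const_mul ‖T‖)
  · exact ((continuous_const.mul (cont_Rres hT)).aestronglyMeasurable).restrict
  · refine Filter.Eventually.of_forall fun s => ?_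
    calc ‖T * Rres T s‖ ≤ ‖T‖ * ‖Rres T s‖ := norm_mul_le _ _
      _ ≤ ‖T‖ * (1 + s^2)⁻¹ := by
          exact mul_le_mul_of_nonneg_left (norm_Rres_le hT s) (norm_nonneg T)

lemma integral_Ioi_resolvent (c : ℝ) (hc : 1 ≤ c) :
    ∫ s in Set.Ioi (0:ℝ), (c^2 + s^2)⁻¹ = π / (2 * c) := by
  have hc0 : 0 < c := lt_of_lt_of_le one_pos hc
  have hderiv : ∀ x ∈ Set.Ici (0:ℝ),
      HasDerivAt (fun s => Real.arctan (s / c) / c) ((c^2 + x^2)⁻¹) x := by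
    intro x _
    have h1 : HasDerivAt (fun s : ℝ => s / c) (1 / c) x := by
      simpa using (hasDerivAt_id x).div_const c
    have h2 := ((Real.hasDerivAt_arctan (x / c)).comp x h1).div_const c
    refine h2.congr_deriv ?_
    rw [div_pow, one_add_div (by positivity)]
    field_simp
  have hint : IntegrableOn (fun s : ℝ => (c^2 + s^2)⁻¹) (Set.Ioi 0) := by
    apply Integrable.mono' integrable_inv_one_add_sq.restrict
    · exact (((continuous_const.add (continuous_pow 2)).inv₀
        (fun s => (by nlinarith [sq_nonneg s, mul_pos hc0 hc0] : (0:ℝ) < c^2 + s^2).ne')).aestronglyMeasurable).restrict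
    · refine Filter.Eventually.of_forall fun s => ?_
      rw [Real.norm_eq_abs, abs_of_pos (by positivity)]
      apply inv_anti₀ (by positivity)
      nlinarith
  have htend : Filter.Tendsto (fun x => Real.arctan (x / c) / c) Filter.atTop
      (nhds ((π/2) / c)) := by
    have h3 : Filter.Tendsto (fun x : ℝ => x / c) Filter.atTop Filter.atTop :=
      Filter.tendsto_id.atTop_div_const hc0
    have h4 : Filter.Tendsto Real.arctan Filter.atTop (nhds (π/2)) :=
      Real.tendsto_arctan_atTop.mono_right nhdsWithin_le_nhds
    exact (h4.comp h3).div_const c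
  have := MeasureTheory.integral_Ioi_of_hasDerivAt_of_tendsto' hderiv hint htend
  rw [this, zero_div, Real.arctan_zero, zero_div, sub_zero]
  ring

lemma rsmul_mul (r : ℝ) (A B : H →L[ℂ] H) : (r • A) * B = r • (A * B) :=
  ContinuousLinearMap.ext fun _ => rfl

lemma mul_rsmul (r : ℝ) (A B : H →L[ℂ] H) : A * (r • B) = r • (A * B) :=
  ContinuousLinearMap.ext fun x => A.map_smul_of_tower r (B x)

lemma diff_identity {D D₀ : H →L[ℂ] H} (hD : IsSelfAdjoint D) (hD₀ : IsSelfAdjoint D₀) (s : ℝ) :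
    D * Rres D s - D₀ * Rres D₀ s =
      Rres D s * ((1 + s^2 : ℝ) • (D - D₀) + D * (D₀ - D) * D₀) * Rres D₀ s := by
  have m1 : (1 + s^2 : ℝ) • (D - D₀) + D * (D₀ - D) * D₀ = D * Uop D₀ s - Uop D s * D₀ := by
    simp only [Uop, mul_add, add_mul, mul_sub, sub_mul, mul_assoc, rsmul_mul, mul_rsmul,
      smul_sub, mul_one, one_mul]
    module
  have key1 : Rres D s * (D * Uop D₀ s) * Rres D₀ s = D * Rres D s := by
    simp only [mul_assoc]
    rw [UR hD₀ s, mul_one]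
    exact (Rres_comm hD s).symm
  have key2 : Rres D s * (Uop D s * D₀) * Rres D₀ s = D₀ * Rres D₀ s := by
    rw [← mul_assoc, RU hD s, one_mul]
  calc D * Rres D s - D₀ * Rres D₀ s
      = Rres D s * (D * Uop D₀ s) * Rres D₀ s - Rres D s * (Uop D s * D₀) * Rres D₀ s := by
        rw [key1, key2]
    _ = Rres D s * (D * Uop D₀ s - Uop D s * D₀) * Rres D₀ s := by
        rw [mul_sub, sub_mul]
    _ = _ := by rw [← m1]

lemma diff_norm {D D₀ : H →L[ℂ] H} (hD : IsSelfAdjoint D) (hD₀ : IsSelfAdjoint D₀) (s : ℝ) :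
    ‖D * Rres D s - D₀ * Rres D₀ s‖ ≤ 2 * (1 + s^2)⁻¹ * ‖D - D₀‖ := by
  have hl : (0:ℝ) < 1 + s^2 := by positivity
  have hs0 : 0 < Real.sqrt (1 + s^2) := Real.sqrt_pos.mpr hl
  have hsq : Real.sqrt (1 + s^2) * Real.sqrt (1 + s^2) = 1 + s^2 := Real.mul_self_sqrt hl.le
  rw [diff_identity hD hD₀ s]
  have hsplit : Rres D s * ((1 + s^2 : ℝ) • (D - D₀) + D * (D₀ - D) * D₀) * Rres D₀ s
      = (1 + s^2 : ℝ) • (Rres D s * (D - D₀) * Rres D₀ s)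
        + (Rres D s * D) * ((D₀ - D) * (D₀ * Rres D₀ s)) := by
    simp only [mul_add, add_mul, rsmul_mul, mul_rsmul, mul_assoc]
  rw [hsplit]
  have A1 : ‖Rres D s * (D - D₀) * Rres D₀ s‖ ≤ (1 + s^2)⁻¹ * ‖D - D₀‖ * (1 + s^2)⁻¹ := by
    calc ‖Rres D s * (D - D₀) * Rres D₀ s‖ ≤ ‖Rres D s * (D - D₀)‖ * ‖Rres D₀ s‖ :=
          norm_mul_le _ _
      _ ≤ (‖Rres D s‖ * ‖D - D₀‖) * ‖Rres D₀ s‖ :=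
          mul_le_mul_of_nonneg_right (norm_mul_le _ _) (norm_nonneg _)
      _ ≤ ((1 + s^2)⁻¹ * ‖D - D₀‖) * (1 + s^2)⁻¹ := by
          apply mul_le_mul
          · exact mul_le_mul_of_nonneg_right (norm_Rres_le hD s) (norm_nonneg _)
          · exact norm_Rres_le hD₀ s
          · exact norm_nonneg _
          · positivity
  have hRD : ‖Rres D s * D‖ ≤ (2 * Real.sqrt (1 + s^2))⁻¹ := by
    rw [← Rres_comm hD s]; exact norm_TRres_le hD s
  have A2 : ‖(Rres D s * D) * ((D₀ - D) * (D₀ * Rres D₀ s))‖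
      ≤ (2 * Real.sqrt (1 + s^2))⁻¹ * (‖D - D₀‖ * (2 * Real.sqrt (1 + s^2))⁻¹) := by
    calc ‖(Rres D s * D) * ((D₀ - D) * (D₀ * Rres D₀ s))‖
        ≤ ‖Rres D s * D‖ * ‖(D₀ - D) * (D₀ * Rres D₀ s)‖ := norm_mul_le _ _
      _ ≤ ‖Rres D s * D‖ * (‖D₀ - D‖ * ‖D₀ * Rres D₀ s‖) :=
          mul_le_mul_of_nonneg_left (norm_mul_le _ _) (norm_nonneg _)
      _ ≤ (2 * Real.sqrt (1 + s^2))⁻¹ * (‖D - D₀‖ * (2 * Real.sqrt (1 + s^2))⁻¹) := by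
          rw [norm_sub_rev (D₀)]
          apply mul_le_mul hRD _ (by positivity) (by positivity)
          exact mul_le_mul_of_nonneg_left (norm_TRres_le hD₀ s) (norm_nonneg _)
  calc ‖(1 + s^2 : ℝ) • (Rres D s * (D - D₀) * Rres D₀ s)
        + (Rres D s * D) * ((D₀ - D) * (D₀ * Rres D₀ s))‖
      ≤ ‖(1 + s^2 : ℝ) • (Rres D s * (D - D₀) * Rres D₀ s)‖
        + ‖(Rres D s * D) * ((D₀ - D) * (D₀ * Rres D₀ s))‖ := norm_add_le _ _
    _ ≤ (1 + s^2) * ((1 + s^2)⁻¹ * ‖D - D₀‖ * (1 + s^2)⁻¹)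
        + (2 * Real.sqrt (1 + s^2))⁻¹ * (‖D - D₀‖ * (2 * Real.sqrt (1 + s^2))⁻¹) := by
        apply add_le_add _ A2
        calc ‖(1 + s^2 : ℝ) • (Rres D s * (D - D₀) * Rres D₀ s)‖
            ≤ ‖(1 + s^2 : ℝ)‖ * ‖Rres D s * (D - D₀) * Rres D₀ s‖ :=
              ContinuousLinearMap.opNorm_smul_le _ _
          _ = (1 + s^2) * ‖Rres D s * (D - D₀) * Rres D₀ s‖ := by
              rw [Real.norm_eq_abs, abs_of_pos hl]
          _ ≤ (1 + s^2) * ((1 + s^2)⁻¹ * ‖D - D₀‖ * (1 + s^2)⁻¹) :=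
              mul_le_mul_of_nonneg_left A1 hl.le
    _ ≤ 2 * (1 + s^2)⁻¹ * ‖D - D₀‖ := by
        have e1 : (1 + s^2) * ((1 + s^2)⁻¹ * ‖D - D₀‖ * (1 + s^2)⁻¹) = ‖D - D₀‖ * (1 + s^2)⁻¹ := by
          field_simp
        have e0 : (2 * Real.sqrt (1 + s^2)) * (2 * Real.sqrt (1 + s^2)) = 4 * (1 + s^2) := by
          linear_combination 4 * hsq
        have e2 : (2 * Real.sqrt (1 + s^2))⁻¹ * (‖D - D₀‖ * (2 * Real.sqrt (1 + s^2))⁻¹)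
            = ‖D - D₀‖ * (4 * (1 + s^2))⁻¹ := by
          rw [← e0, mul_inv]; ring
        rw [e1, e2]
        have e3 : ‖D - D₀‖ * (4 * (1 + s^2))⁻¹ ≤ ‖D - D₀‖ * (1 + s^2)⁻¹ :=
          mul_le_mul_of_nonneg_left (inv_anti₀ hl (by linarith)) (norm_nonneg _)
        nlinarith [e3]

lemma rsmul_sub (r : ℝ) (A B : H →L[ℂ] H) : r • (A - B) = r • A - r • B :=
  ContinuousLinearMap.ext fun x => smul_sub r (A x) (B x)

lemma fcont : Continuous (fun t : ℝ => t / Real.sqrt (1 + t ^ 2)) := by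
  apply Continuous.div continuous_id (Real.continuous_sqrt.comp (by continuity))
  intro t
  exact (Real.sqrt_pos.mpr (by positivity)).ne'

lemma integral_Gop {T : H →L[ℂ] H} (hT : IsSelfAdjoint T) :
    (∫ s in Set.Ioi (0:ℝ), T * Rres T s)
      = (π/2 : ℝ) • cfc (fun t : ℝ => t / Real.sqrt (1 + t ^ 2)) T := by
  have hn : Module.finrank ℂ (EuclideanSpace ℂ (Fin n)) = n := finrank_euclideanSpace_fin
  have hTsym : (↑T : H →ₗ[ℂ] H).IsSymmetric := hT.isSymmetric
  set b := hTsym.eigenvectorBasis hn with hb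
  apply ContinuousLinearMap.coe_injective
  apply Module.Basis.ext b.toBasis
  intro i
  simp only [OrthonormalBasis.coe_toBasis, ContinuousLinearMap.coe_coe]
  set v := b i with hvdef
  set μ := hTsym.eigenvalues hn i with hμ
  have hv : T v = (μ : ℂ) • v := hTsym.apply_eigenvectorBasis hn i
  have hv' : T v = μ • v := by
    rw [hv]
    exact (algebraMap_smul ℂ μ v)
  have hv0 : v ≠ 0 := b.toBasis.ne_zero i
  set c := Real.sqrt (1 + μ^2) with hc
  have hlc : (0:ℝ) < 1 + μ^2 := by positivity
  have hc2 : c^2 = 1 + μ^2 := Real.sq_sqrt hlc.le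
  have hc0 : 0 < c := Real.sqrt_pos.mpr hlc
  have hc1 : 1 ≤ c := by nlinarith
  have happ : ∀ s : ℝ, (T * Rres T s) v = ((1 + s^2 + μ^2)⁻¹ * μ) • v := by
    intro s
    rw [ContinuousLinearMap.mul_apply, Rres_eigen hT s hv',
      ContinuousLinearMap.map_smul_of_tower, hv', smul_smul]
  rw [ContinuousLinearMap.integral_apply (integrable_Gop hT)]
  simp only [happ]
  rw [integral_smul_const, ContinuousLinearMap.smul_apply, cfc_eigen hT fcont hv0 hv',
    smul_smul]
  congr 1
  have hfun : (fun s : ℝ => (1 + s^2 + μ^2)⁻¹ * μ) = fun s : ℝ => (c^2 + s^2)⁻¹ * μ := by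
    funext s
    rw [hc2]
    ring_nf
  rw [hfun, integral_mul_const, integral_Ioi_resolvent c hc1]
  rw [div_mul_eq_mul_div, mul_comm]
  field_simp
  ring

/-- There is an absolute constant `C > 0` such that for every `n ≥ 1` and all
self-adjoint operators `D, D₀` on `ℂⁿ`, with `f(t) = t(1+t²)^{-1/2}` applied via the
functional calculus, `‖f(D) - f(D₀)‖ ≤ C ‖D - D₀‖` in the operator norm. -/
theorem stmt19 :
    ∃ C : ℝ, 0 < C ∧
      ∀ (n : ℕ), 1 ≤ n →
        ∀ (D D₀ : EuclideanSpace ℂ (Fin n) →L[ℂ] EuclideanSpace ℂ (Fin n)),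
          IsSelfAdjoint D → IsSelfAdjoint D₀ →
            ‖cfc (fun t : ℝ => t / Real.sqrt (1 + t ^ 2)) D -
                cfc (fun t : ℝ => t / Real.sqrt (1 + t ^ 2)) D₀‖ ≤ C * ‖D - D₀‖ := by
  refine ⟨2, two_pos, fun n hn D D₀ hD hD₀ => ?_⟩
  have hπ : (0:ℝ) < π := Real.pi_pos
  have hdiff : cfc (fun t : ℝ => t / Real.sqrt (1 + t ^ 2)) D -
      cfc (fun t : ℝ => t / Real.sqrt (1 + t ^ 2)) D₀
      = (2/π : ℝ) • ∫ s in Set.Ioi (0:ℝ), (D * Rres D s - D₀ * Rres D₀ s) := by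
    rw [integral_sub (integrable_Gop hD) (integrable_Gop hD₀), rsmul_sub,
      integral_Gop hD, integral_Gop hD₀, smul_smul, smul_smul]
    rw [div_mul_div_comm, mul_comm (2:ℝ) π]
    rw [div_self (by positivity), one_smul, one_smul]
  rw [hdiff]
  have hbound : ‖∫ s in Set.Ioi (0:ℝ), (D * Rres D s - D₀ * Rres D₀ s)‖
      ≤ ∫ s in Set.Ioi (0:ℝ), 2 * (1 + s^2)⁻¹ * ‖D - D₀‖ := by
    apply norm_integral_le_of_norm_le
    · exact (integrable_inv_one_add_sq.restrict.const_mul 2).mul_const _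
    · exact Filter.Eventually.of_forall fun s => diff_norm hD hD₀ s
  have hval : ∫ s in Set.Ioi (0:ℝ), 2 * (1 + s^2)⁻¹ * ‖D - D₀‖ = π * ‖D - D₀‖ := by
    rw [integral_mul_const, MeasureTheory.integral_const_mul, integral_Ioi_inv_one_add_sq, Real.arctan_zero,
      sub_zero]
    ring
  calc ‖(2/π : ℝ) • ∫ s in Set.Ioi (0:ℝ), (D * Rres D s - D₀ * Rres D₀ s)‖
      ≤ ‖(2/π : ℝ)‖ * ‖∫ s in Set.Ioi (0:ℝ), (D * Rres D s - D₀ * Rres D₀ s)‖ :=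
        ContinuousLinearMap.opNorm_smul_le _ _
    _ ≤ (2/π) * (π * ‖D - D₀‖) := by
        rw [Real.norm_eq_abs, abs_of_pos (by positivity)]
        exact mul_le_mul_of_nonneg_left (hbound.trans_eq hval) (by positivity)
    _ = 2 * ‖D - D₀‖ := by
        field_simp
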